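/- Let G be a graph and C a commutative monoid. If two additive monoid homomorphisms f, g : H₁(G, ℕ) → C agree on every minimal element of H₁(G, ℕ), then f = g. (In particular, for a C-labeled graph (G, ℓ), the feedback homomorphism ℓ̃ : H₁(G,ℕ) → C extending ℓ is determined by its values on minimal cycles.) -/
import Mathlib


/-- The first homology monoid `H₁(G,ℕ)` of a graph `G = (E,V,s,t)` with coefficients in `ℕ`:
the additive submonoid of 1-cycles in `C₁(G,ℕ) = E →₀ ℕ`, i.e. those 1-chains `c` with
`C[s](c) = C[t](c)`, where `C[s], C[t]` are induced by the source and target maps. -/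
noncomputable def graphH1 {E V : Type*} (s t : E → V) : AddSubmonoid (E →₀ ℕ) where
  carrier := {c | Finsupp.mapDomain s c = Finsupp.mapDomain t c}
  add_mem' := by
    intro a b ha hb
    simp only [Set.mem_setOf_eq, Finsupp.mapDomain_add] at *
    rw [ha, hb]
  zero_mem' := by
    simp only [Set.mem_setOf_eq, Finsupp.mapDomain_zero]

/-- `x` is a minimal element of `H₁(G,ℕ)` for the canonical preorder (`y ≤ x` iff `y + a = x`
for some `a ∈ H₁(G,ℕ)`): `x` is a nonzero cycle and every cycle `y ≤ x` is `x` or `0`. -/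
def IsMinimalCycle {E V : Type*} (s t : E → V) (x : E →₀ ℕ) : Prop :=
  x ∈ graphH1 s t ∧ x ≠ 0 ∧
    ∀ y ∈ graphH1 s t, (∃ a ∈ graphH1 s t, y + a = x) → y = x ∨ y = 0

/-- Two additive monoid homomorphisms `f, g : H₁(G,ℕ) → C` that agree on every
minimal element of `H₁(G,ℕ)` are equal.  (In particular the feedback homomorphism of a
`C`-labeled graph is determined by its values on minimal cycles.) -/
theorem h1_hom_determined_by_minimal_elements
    {E V : Type*} (s t : E → V) {C : Type*} [AddCommMonoid C]
    (f g : (graphH1 s t) →+ C)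
    (h : ∀ x : graphH1 s t, IsMinimalCycle s t (x : E →₀ ℕ) → f x = g x) :
    f = g := by
  have wzero : ∀ x : E →₀ ℕ, x.sum (fun _ m => m) = 0 → x = 0 := by
    intro x hx
    ext e
    have hle : x e ≤ x.sum (fun _ m => m) := by
      by_cases hm : e ∈ x.support
      · exact Finset.single_le_sum (fun i _ => Nat.zero_le _) hm
      · simp [Finsupp.notMem_support_iff.mp hm]
    simp only [Finsupp.coe_zero, Pi.zero_apply]
    omega
  have key : ∀ n : ℕ, ∀ x : graphH1 s t, (x : E →₀ ℕ).sum (fun _ m => m) ≤ n →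
      f x = g x := by
    intro n
    induction n with
    | zero =>
      intro x hx
      have hx0 : (x : E →₀ ℕ) = 0 := wzero _ (Nat.le_zero.mp hx)
      have : x = 0 := Subtype.ext hx0
      rw [this, map_zero, map_zero]
    | succ n ih =>
      intro x hx
      by_cases hx0 : (x : E →₀ ℕ) = 0
      · have : x = 0 := Subtype.ext hx0
        rw [this, map_zero, map_zero]
      by_cases hmin : IsMinimalCycle s t (x : E →₀ ℕ)
      · exact h x hmin
      · unfold IsMinimalCycle at hmin
        push_neg at hmin
        obtain ⟨y, hy, ⟨a, ha, hya⟩, hyx, hy0⟩ := hmin x.2 hx0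
        have ha0 : a ≠ 0 := by
          rintro rfl
          exact hyx (by simpa using hya)
        have hsum : y.sum (fun _ m => m) + a.sum (fun _ m => m)
            = (x : E →₀ ℕ).sum (fun _ m => m) := by
          classical
          rw [← hya, Finsupp.sum_add_index (fun _ _ => rfl) (fun _ _ _ _ => rfl)]
        have hy1 : 1 ≤ y.sum (fun _ m => m) := by
          rcases Nat.eq_zero_or_pos (y.sum fun _ m => m) with h0 | h1
          · exact absurd (wzero _ h0) hy0
          · exact h1
        have ha1 : 1 ≤ a.sum (fun _ m => m) := by
          rcases Nat.eq_zero_or_pos (a.sum fun _ m => m) with h0 | h1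
          · exact absurd (wzero _ h0) ha0
          · exact h1
        have hxeq : x = (⟨y, hy⟩ : graphH1 s t) + ⟨a, ha⟩ := Subtype.ext (by simp [hya])
        rw [hxeq, map_add, map_add,
          ih ⟨y, hy⟩ (show y.sum (fun _ m => m) ≤ n by omega),
          ih ⟨a, ha⟩ (show a.sum (fun _ m => m) ≤ n by omega)]
  ext x
  exact key _ x le_rfl
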